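/- For discrete measures on a finite metric space, the EOT problem with costs c_1 = 2·1_{x≠y} and c_2 = d equals the Dudley metric: EOT_{(c_1,c_2)}(μ,ν) = sup{ Σ_x f(x)(μ(x)-ν(x)) : ‖f‖_∞ + ‖f‖_Lip ≤ 1 }, where ‖f‖_Lip = max_{x≠y} |f(x)-f(y)|/d(x,y). -/

import Mathlib

set_option linter.unusedSectionVars false
set_option maxHeartbeats 1000000

open Finset Filter Topology

section Cone

variable (X : Type*) [Fintype X] [Nonempty X] [MetricSpace X] [DecidableEq X]

def EOTcone : Set ((X → ℝ) × (X → ℝ) × ℝ × ℝ) :=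
  {p | ∃ γ₁ γ₂ : X → X → ℝ, ∃ s₁ s₂ : ℝ,
    (∀ x y, 0 ≤ γ₁ x y) ∧ (∀ x y, 0 ≤ γ₂ x y) ∧ 0 ≤ s₁ ∧ 0 ≤ s₂ ∧
    p = (fun x => ∑ y, (γ₁ x y + γ₂ x y),
         fun y => ∑ x, (γ₁ x y + γ₂ x y),
         (∑ x, ∑ y, γ₁ x y * (if x = y then 0 else 2)) + s₁,
         (∑ x, ∑ y, γ₂ x y * dist x y) + s₂)}

variable {X}

lemma EOTcone_add {p q} (hp : p ∈ EOTcone X) (hq : q ∈ EOTcone X) :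
    p + q ∈ EOTcone X := by
  obtain ⟨γ₁, γ₂, s₁, s₂, h1, h2, hs1, hs2, rfl⟩ := hp
  obtain ⟨δ₁, δ₂, t₁, t₂, k1, k2, kt1, kt2, rfl⟩ := hq
  refine ⟨fun x y => γ₁ x y + δ₁ x y, fun x y => γ₂ x y + δ₂ x y, s₁ + t₁, s₂ + t₂,
    fun x y => add_nonneg (h1 x y) (k1 x y), fun x y => add_nonneg (h2 x y) (k2 x y),
    add_nonneg hs1 kt1, add_nonneg hs2 kt2, ?_⟩
  simp only [Prod.mk_add_mk, Prod.mk.injEq]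
  refine ⟨?_, ?_, ?_, ?_⟩
  · funext x
    simp only [Pi.add_apply, ← Finset.sum_add_distrib]
    exact Finset.sum_congr rfl fun y _ => by ring
  · funext y
    simp only [Pi.add_apply, ← Finset.sum_add_distrib]
    exact Finset.sum_congr rfl fun x _ => by ring
  · have : ∑ x, ∑ y, (γ₁ x y + δ₁ x y) * (if x = y then 0 else 2)
        = (∑ x, ∑ y, γ₁ x y * (if x = y then 0 else 2))
          + ∑ x, ∑ y, δ₁ x y * (if x = y then 0 else 2) := by
      rw [← Finset.sum_add_distrib]
      refine Finset.sum_congr rfl fun x _ => ?_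
      rw [← Finset.sum_add_distrib]
      exact Finset.sum_congr rfl fun y _ => by ring
    rw [this]; ring
  · have : ∑ x, ∑ y, (γ₂ x y + δ₂ x y) * dist x y
        = (∑ x, ∑ y, γ₂ x y * dist x y) + ∑ x, ∑ y, δ₂ x y * dist x y := by
      rw [← Finset.sum_add_distrib]
      refine Finset.sum_congr rfl fun x _ => ?_
      rw [← Finset.sum_add_distrib]
      exact Finset.sum_congr rfl fun y _ => by ring
    rw [this]; ring

lemma EOTcone_smul {c : ℝ} (hc : 0 ≤ c) {p} (hp : p ∈ EOTcone X) :
    c • p ∈ EOTcone X := by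
  obtain ⟨γ₁, γ₂, s₁, s₂, h1, h2, hs1, hs2, rfl⟩ := hp
  refine ⟨fun x y => c * γ₁ x y, fun x y => c * γ₂ x y, c * s₁, c * s₂,
    fun x y => mul_nonneg hc (h1 x y), fun x y => mul_nonneg hc (h2 x y),
    mul_nonneg hc hs1, mul_nonneg hc hs2, ?_⟩
  simp only [Prod.smul_mk, Prod.mk.injEq]
  refine ⟨?_, ?_, ?_, ?_⟩
  · funext x
    simp only [Pi.smul_apply, smul_eq_mul, Finset.mul_sum]
    exact Finset.sum_congr rfl fun y _ => by ring
  · funext y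
    simp only [Pi.smul_apply, smul_eq_mul, Finset.mul_sum]
    exact Finset.sum_congr rfl fun x _ => by ring
  · have : ∑ x, ∑ y, (c * γ₁ x y) * (if x = y then 0 else 2)
        = c * ∑ x, ∑ y, γ₁ x y * (if x = y then 0 else 2) := by
      rw [Finset.mul_sum]
      refine Finset.sum_congr rfl fun x _ => ?_
      rw [Finset.mul_sum]
      exact Finset.sum_congr rfl fun y _ => by ring
    rw [this]; simp [smul_eq_mul]; ring
  · have : ∑ x, ∑ y, (c * γ₂ x y) * dist x y
        = c * ∑ x, ∑ y, γ₂ x y * dist x y := by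
      rw [Finset.mul_sum]
      refine Finset.sum_congr rfl fun x _ => ?_
      rw [Finset.mul_sum]
      exact Finset.sum_congr rfl fun y _ => by ring
    rw [this]; simp [smul_eq_mul]; ring

lemma EOTcone_convex : Convex ℝ (EOTcone X) := by
  intro p hp q hq a b ha hb _
  exact EOTcone_add (EOTcone_smul ha hp) (EOTcone_smul hb hq)

lemma EOTcone_zero_mem : (0 : (X → ℝ) × (X → ℝ) × ℝ × ℝ) ∈ EOTcone X := by
  refine ⟨fun _ _ => 0, fun _ _ => 0, 0, 0, fun _ _ => le_rfl, fun _ _ => le_rfl,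
    le_rfl, le_rfl, ?_⟩
  ext <;> simp

lemma EOTcone_gen1 (x y : X) :
    ((fun a => if a = x then (1:ℝ) else 0), (fun b => if b = y then (1:ℝ) else 0),
      (if x = y then (0:ℝ) else 2), (0:ℝ)) ∈ EOTcone X := by
  refine ⟨fun a b => (if a = x then (1:ℝ) else 0) * (if b = y then (1:ℝ) else 0),
    fun _ _ => 0, 0, 0, ?_, fun _ _ => le_rfl, le_rfl, le_rfl, ?_⟩
  · intro a b
    apply mul_nonneg <;> · split <;> norm_num
  simp only [Prod.mk.injEq]
  refine ⟨?_, ?_, ?_, ?_⟩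
  · funext a
    simp [← Finset.mul_sum, Finset.sum_ite_eq']
  · funext b
    simp [← Finset.sum_mul, Finset.sum_ite_eq']
  · symm
    rw [add_zero]
    have inner : ∀ a : X, ∑ b, ((if a = x then (1:ℝ) else 0) * (if b = y then (1:ℝ) else 0))
        * (if a = b then (0:ℝ) else 2)
        = (if a = x then (1:ℝ) else 0) * (if a = y then (0:ℝ) else 2) := by
      intro a
      rw [Finset.sum_eq_single y]
      · simp
      · intro b _ hb; simp [hb]
      · intro h; exact absurd (Finset.mem_univ y) h
    rw [Finset.sum_congr rfl fun a _ => inner a, Finset.sum_eq_single x]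
    · simp
    · intro a _ ha; simp [ha]
    · intro h; exact absurd (Finset.mem_univ x) h
  · simp

lemma EOTcone_gen2 (x y : X) :
    ((fun a => if a = x then (1:ℝ) else 0), (fun b => if b = y then (1:ℝ) else 0),
      (0:ℝ), dist x y) ∈ EOTcone X := by
  refine ⟨fun _ _ => 0,
    fun a b => (if a = x then (1:ℝ) else 0) * (if b = y then (1:ℝ) else 0),
    0, 0, fun _ _ => le_rfl, ?_, le_rfl, le_rfl, ?_⟩
  · intro a b
    apply mul_nonneg <;> · split <;> norm_num
  simp only [Prod.mk.injEq]
  refine ⟨?_, ?_, ?_, ?_⟩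
  · funext a
    simp [← Finset.mul_sum, Finset.sum_ite_eq']
  · funext b
    simp [← Finset.sum_mul, Finset.sum_ite_eq']
  · simp
  · simp [ite_mul, one_mul, zero_mul, Finset.sum_ite_eq']

lemma EOTcone_gen3 :
    ((0 : X → ℝ), (0 : X → ℝ), (1:ℝ), (0:ℝ)) ∈ EOTcone X := by
  refine ⟨fun _ _ => 0, fun _ _ => 0, 1, 0, fun _ _ => le_rfl, fun _ _ => le_rfl,
    zero_le_one, le_rfl, ?_⟩
  simp only [Prod.mk.injEq]
  refine ⟨?_, ?_, ?_, ?_⟩ <;> first | (funext t; simp) | simp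

lemma EOTcone_gen4 :
    ((0 : X → ℝ), (0 : X → ℝ), (0:ℝ), (1:ℝ)) ∈ EOTcone X := by
  refine ⟨fun _ _ => 0, fun _ _ => 0, 0, 1, fun _ _ => le_rfl, fun _ _ => le_rfl,
    le_rfl, zero_le_one, ?_⟩
  simp only [Prod.mk.injEq]
  refine ⟨?_, ?_, ?_, ?_⟩ <;> first | (funext t; simp) | simp


lemma EOTcone_isClosed : IsClosed (EOTcone X) := by
  refine IsSeqClosed.isClosed ?_
  intro p a hp hlim
  choose γ₁ γ₂ s₁ s₂ h1 h2 hs1 hs2 hsp using hp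
  -- component limits of p
  have c1 : ∀ x : X, Tendsto (fun n => (p n).1 x) atTop (𝓝 (a.1 x)) := fun x =>
    (((continuous_apply x).comp continuous_fst).tendsto a).comp hlim
  have c2 : ∀ y : X, Tendsto (fun n => (p n).2.1 y) atTop (𝓝 (a.2.1 y)) := fun y =>
    (((continuous_apply y).comp (continuous_fst.comp continuous_snd)).tendsto a).comp hlim
  have c3 : Tendsto (fun n => (p n).2.2.1) atTop (𝓝 a.2.2.1) :=
    ((continuous_fst.comp (continuous_snd.comp continuous_snd)).tendsto a).comp hlim
  have c4 : Tendsto (fun n => (p n).2.2.2) atTop (𝓝 a.2.2.2) :=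
    ((continuous_snd.comp (continuous_snd.comp continuous_snd)).tendsto a).comp hlim
  -- a uniform bound
  obtain ⟨C, hC⟩ := hlim.norm.bddAbove_range
  have hC' : ∀ n, ‖p n‖ ≤ C := fun n => hC (Set.mem_range_self n)
  have hrow : ∀ n x, (p n).1 x = ∑ y, (γ₁ n x y + γ₂ n x y) := fun n x => by
    rw [hsp n]
  have hcol : ∀ n y, (p n).2.1 y = ∑ x, (γ₁ n x y + γ₂ n x y) := fun n y => by
    rw [hsp n]
  have h3 : ∀ n, (p n).2.2.1 = (∑ x, ∑ y, γ₁ n x y * (if x = y then 0 else 2)) + s₁ n :=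
    fun n => by rw [hsp n]
  have h4 : ∀ n, (p n).2.2.2 = (∑ x, ∑ y, γ₂ n x y * dist x y) + s₂ n :=
    fun n => by rw [hsp n]
  have hrowle : ∀ n x, (p n).1 x ≤ C := by
    intro n x
    calc (p n).1 x ≤ |(p n).1 x| := le_abs_self _
      _ = ‖(p n).1 x‖ := (Real.norm_eq_abs _).symm
      _ ≤ ‖(p n).1‖ := norm_le_pi_norm _ x
      _ ≤ ‖p n‖ := norm_fst_le _
      _ ≤ C := hC' n
  have hsumrow : ∀ n x y, γ₁ n x y + γ₂ n x y ≤ (p n).1 x := by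
    intro n x y
    rw [hrow n x]
    exact Finset.single_le_sum (fun i _ => add_nonneg (h1 n x i) (h2 n x i))
      (Finset.mem_univ y)
  have hg1le : ∀ n x y, γ₁ n x y ≤ C := fun n x y =>
    le_trans (le_trans (le_add_of_nonneg_right (h2 n x y)) (hsumrow n x y)) (hrowle n x)
  have hg2le : ∀ n x y, γ₂ n x y ≤ C := fun n x y =>
    le_trans (le_trans (le_add_of_nonneg_left (h1 n x y)) (hsumrow n x y)) (hrowle n x)
  have hA0 : ∀ n, (0:ℝ) ≤ ∑ x, ∑ y, γ₁ n x y * (if x = y then 0 else 2) := by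
    intro n
    refine Finset.sum_nonneg fun x _ => Finset.sum_nonneg fun y _ =>
      mul_nonneg (h1 n x y) ?_
    split <;> norm_num
  have hB0 : ∀ n, (0:ℝ) ≤ ∑ x, ∑ y, γ₂ n x y * dist x y := fun n =>
    Finset.sum_nonneg fun x _ => Finset.sum_nonneg fun y _ =>
      mul_nonneg (h2 n x y) dist_nonneg
  have hth : ∀ n, (p n).2.2.1 ≤ C := by
    intro n
    calc (p n).2.2.1 ≤ |(p n).2.2.1| := le_abs_self _
      _ = ‖(p n).2.2.1‖ := (Real.norm_eq_abs _).symm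
      _ ≤ ‖(p n).2.2‖ := norm_fst_le _
      _ ≤ ‖(p n).2‖ := norm_snd_le _
      _ ≤ ‖p n‖ := norm_snd_le _
      _ ≤ C := hC' n
  have hth' : ∀ n, (p n).2.2.2 ≤ C := by
    intro n
    calc (p n).2.2.2 ≤ |(p n).2.2.2| := le_abs_self _
      _ = ‖(p n).2.2.2‖ := (Real.norm_eq_abs _).symm
      _ ≤ ‖(p n).2.2‖ := norm_snd_le _
      _ ≤ ‖(p n).2‖ := norm_snd_le _
      _ ≤ ‖p n‖ := norm_snd_le _
      _ ≤ C := hC' n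
  have hs1le : ∀ n, s₁ n ≤ C := by
    intro n
    have := h3 n
    have := hA0 n
    have := hth n
    linarith
  have hs2le : ∀ n, s₂ n ≤ C := by
    intro n
    have := h4 n
    have := hB0 n
    have := hth' n
    linarith
  -- compactness
  set e : ℕ → (X → X → ℝ) × (X → X → ℝ) × ℝ × ℝ :=
    fun n => (γ₁ n, γ₂ n, s₁ n, s₂ n) with hedef
  have hK : IsCompact (Set.Icc
      ((fun _ _ => 0, fun _ _ => 0, 0, 0) : (X → X → ℝ) × (X → X → ℝ) × ℝ × ℝ)
      ((fun _ _ => C, fun _ _ => C, C, C))) := isCompact_Icc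
  have hmem : ∀ n, e n ∈ Set.Icc
      ((fun _ _ => 0, fun _ _ => 0, 0, 0) : (X → X → ℝ) × (X → X → ℝ) × ℝ × ℝ)
      ((fun _ _ => C, fun _ _ => C, C, C)) := by
    intro n
    constructor
    · exact ⟨fun x y => h1 n x y, fun x y => h2 n x y, hs1 n, hs2 n⟩
    · exact ⟨fun x y => hg1le n x y, fun x y => hg2le n x y, hs1le n, hs2le n⟩
  obtain ⟨L, _, φ, hφ, hconv⟩ := hK.tendsto_subseq hmem
  -- component limits of the subsequence
  have d1 : ∀ x y, Tendsto (fun n => γ₁ (φ n) x y) atTop (𝓝 (L.1 x y)) := by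
    intro x y
    have hcont : Continuous (fun q : (X → X → ℝ) × (X → X → ℝ) × ℝ × ℝ => q.1 x y) :=
      (continuous_apply y).comp ((continuous_apply x).comp continuous_fst)
    have := (hcont.tendsto L).comp hconv
    exact this
  have d2 : ∀ x y, Tendsto (fun n => γ₂ (φ n) x y) atTop (𝓝 (L.2.1 x y)) := by
    intro x y
    have hcont : Continuous (fun q : (X → X → ℝ) × (X → X → ℝ) × ℝ × ℝ => q.2.1 x y) :=
      (continuous_apply y).comp ((continuous_apply x).comp
        (continuous_fst.comp continuous_snd))
    have := (hcont.tendsto L).comp hconv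
    exact this
  have d3 : Tendsto (fun n => s₁ (φ n)) atTop (𝓝 L.2.2.1) :=
    ((continuous_fst.comp (continuous_snd.comp continuous_snd)).tendsto L).comp hconv
  have d4 : Tendsto (fun n => s₂ (φ n)) atTop (𝓝 L.2.2.2) :=
    ((continuous_snd.comp (continuous_snd.comp continuous_snd)).tendsto L).comp hconv
  have hL1 : ∀ x y, 0 ≤ L.1 x y := fun x y =>
    le_of_tendsto_of_tendsto' tendsto_const_nhds (d1 x y) (fun n => h1 (φ n) x y)
  have hL2 : ∀ x y, 0 ≤ L.2.1 x y := fun x y =>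
    le_of_tendsto_of_tendsto' tendsto_const_nhds (d2 x y) (fun n => h2 (φ n) x y)
  have hL3 : 0 ≤ L.2.2.1 :=
    le_of_tendsto_of_tendsto' tendsto_const_nhds d3 (fun n => hs1 (φ n))
  have hL4 : 0 ≤ L.2.2.2 :=
    le_of_tendsto_of_tendsto' tendsto_const_nhds d4 (fun n => hs2 (φ n))
  refine ⟨L.1, L.2.1, L.2.2.1, L.2.2.2, hL1, hL2, hL3, hL4, ?_⟩
  have hφtop : Tendsto φ atTop atTop := hφ.tendsto_atTop
  refine Prod.ext ?_ (Prod.ext ?_ (Prod.ext ?_ ?_))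
  · funext x
    refine tendsto_nhds_unique ((c1 x).comp hφtop) ?_
    have lim2 : Tendsto (fun n => ∑ y, (γ₁ (φ n) x y + γ₂ (φ n) x y)) atTop
        (𝓝 (∑ y, (L.1 x y + L.2.1 x y))) :=
      tendsto_finset_sum _ fun y _ => (d1 x y).add (d2 x y)
    exact lim2.congr fun n => (hrow (φ n) x).symm
  · funext y
    refine tendsto_nhds_unique ((c2 y).comp hφtop) ?_
    have lim2 : Tendsto (fun n => ∑ x, (γ₁ (φ n) x y + γ₂ (φ n) x y)) atTop
        (𝓝 (∑ x, (L.1 x y + L.2.1 x y))) :=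
      tendsto_finset_sum _ fun x _ => (d1 x y).add (d2 x y)
    exact lim2.congr fun n => (hcol (φ n) y).symm
  · refine tendsto_nhds_unique (c3.comp hφtop) ?_
    have lim2 : Tendsto
        (fun n => (∑ x, ∑ y, γ₁ (φ n) x y * (if x = y then 0 else 2)) + s₁ (φ n)) atTop
        (𝓝 ((∑ x, ∑ y, L.1 x y * (if x = y then 0 else 2)) + L.2.2.1)) :=
      (tendsto_finset_sum _ fun x _ =>
        tendsto_finset_sum _ fun y _ => (d1 x y).mul_const _).add d3
    exact lim2.congr fun n => (h3 (φ n)).symm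
  · refine tendsto_nhds_unique (c4.comp hφtop) ?_
    have lim2 : Tendsto
        (fun n => (∑ x, ∑ y, γ₂ (φ n) x y * dist x y) + s₂ (φ n)) atTop
        (𝓝 ((∑ x, ∑ y, L.2.1 x y * dist x y) + L.2.2.2)) :=
      (tendsto_finset_sum _ fun x _ =>
        tendsto_finset_sum _ fun y _ => (d2 x y).mul_const _).add d4
    exact lim2.congr fun n => (h4 (φ n)).symm

end Cone

section EOTAux

variable (X : Type*) [Fintype X] [Nonempty X] [MetricSpace X] [DecidableEq X]

/-- primal set -/
def EOTPset (μ ν : X → ℝ) : Set ℝ :=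
  {t : ℝ | ∃ γ₁ γ₂ : X → X → ℝ,
        (∀ x y, 0 ≤ γ₁ x y) ∧ (∀ x y, 0 ≤ γ₂ x y) ∧
        (∀ x, ∑ y, (γ₁ x y + γ₂ x y) = μ x) ∧
        (∀ y, ∑ x, (γ₁ x y + γ₂ x y) = ν y) ∧
        t = max (∑ x, ∑ y, γ₁ x y * (if x = y then 0 else 2))
                (∑ x, ∑ y, γ₂ x y * dist x y)}

/-- dual set -/
def EOTDset (μ ν : X → ℝ) : Set ℝ :=
  {t : ℝ | ∃ f : X → ℝ, ∃ α β : ℝ, α + β ≤ 1 ∧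
        (∀ x, |f x| ≤ α) ∧ (∀ x y, |f x - f y| ≤ β * dist x y) ∧
        t = ∑ x, f x * (μ x - ν x)}

variable {X}

lemma EOTPset_nonneg (μ ν : X → ℝ) : ∀ t ∈ EOTPset X μ ν, (0:ℝ) ≤ t := by
  rintro t ⟨γ₁, γ₂, h1, h2, -, -, rfl⟩
  have hA : (0:ℝ) ≤ ∑ x, ∑ y, γ₁ x y * (if x = y then 0 else 2) := by
    refine sum_nonneg fun x _ => sum_nonneg fun y _ => mul_nonneg (h1 x y) ?_
    split <;> norm_num
  exact le_trans hA (le_max_left _ _)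

lemma EOTPset_nonempty (μ ν : X → ℝ) (hμ1 : ∑ x, μ x = 1) (hν1 : ∑ x, ν x = 1)
    (hμ0 : ∀ x, 0 ≤ μ x) (hν0 : ∀ x, 0 ≤ ν x) : (EOTPset X μ ν).Nonempty := by
  refine ⟨_, fun x y => μ x * ν y, fun _ _ => 0, fun x y => mul_nonneg (hμ0 x) (hν0 y),
    fun _ _ => le_rfl, ?_, ?_, rfl⟩
  · intro x; simp [← Finset.mul_sum, hν1]
  · intro y; simp [← Finset.sum_mul, hμ1]

lemma EOT_weak (μ ν : X → ℝ) (hμ1 : ∑ x, μ x = 1) (hν1 : ∑ x, ν x = 1) :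
    ∀ s ∈ EOTDset X μ ν, ∀ t ∈ EOTPset X μ ν, s ≤ t := by
  rintro s ⟨f, α, β, hαβ, hfα, hfβ, rfl⟩ t ⟨γ₁, γ₂, h1, h2, hrow, hcol, rfl⟩
  set A := ∑ x, ∑ y, γ₁ x y * (if x = y then 0 else 2) with hAdef
  set B := ∑ x, ∑ y, γ₂ x y * dist x y with hBdef
  have hA0 : (0:ℝ) ≤ A := by
    refine sum_nonneg fun x _ => sum_nonneg fun y _ => mul_nonneg (h1 x y) ?_
    split <;> norm_num
  have hB0 : (0:ℝ) ≤ B :=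
    sum_nonneg fun x _ => sum_nonneg fun y _ => mul_nonneg (h2 x y) dist_nonneg
  have hmax0 : (0:ℝ) ≤ max A B := le_trans hA0 (le_max_left _ _)
  have hα0 : 0 ≤ α := le_trans (abs_nonneg _) (hfα (Classical.arbitrary X))
  by_cases hβ : 0 ≤ β
  · -- main case
    have e1 : ∑ x, f x * μ x = ∑ x, ∑ y, f x * (γ₁ x y + γ₂ x y) := by
      refine Finset.sum_congr rfl fun x _ => ?_
      rw [← hrow x, Finset.mul_sum]
    have e2 : ∑ x, f x * ν x = ∑ x, ∑ y, f y * (γ₁ x y + γ₂ x y) := by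
      rw [Finset.sum_comm]
      refine Finset.sum_congr rfl fun y _ => ?_
      rw [← hcol y, Finset.mul_sum]
    have es : ∑ x, f x * (μ x - ν x)
        = ∑ x, ∑ y, (f x - f y) * (γ₁ x y + γ₂ x y) := by
      have : ∑ x, f x * (μ x - ν x) = ∑ x, f x * μ x - ∑ x, f x * ν x := by
        rw [← Finset.sum_sub_distrib]
        exact Finset.sum_congr rfl fun x _ => by ring
      rw [this, e1, e2, ← Finset.sum_sub_distrib]
      refine Finset.sum_congr rfl fun x _ => ?_
      rw [← Finset.sum_sub_distrib]
      exact Finset.sum_congr rfl fun y _ => by ring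
    have key : ∑ x, f x * (μ x - ν x) ≤ α * A + β * B := by
      rw [es, hAdef, hBdef, Finset.mul_sum, Finset.mul_sum, ← Finset.sum_add_distrib]
      refine Finset.sum_le_sum fun x _ => ?_
      rw [Finset.mul_sum, Finset.mul_sum, ← Finset.sum_add_distrib]
      refine Finset.sum_le_sum fun y _ => ?_
      by_cases hxy : x = y
      · subst hxy; simp
      · simp only [if_neg hxy]
        have habs1 : f x - f y ≤ 2 * α := by
          have := abs_add_le (f x) (-(f y))
          have h1 := hfα x; have h2 := hfα y
          have : |f x - f y| ≤ |f x| + |f y| := abs_sub _ _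
          calc f x - f y ≤ |f x - f y| := le_abs_self _
            _ ≤ |f x| + |f y| := this
            _ ≤ 2 * α := by linarith
        have habs2 : f x - f y ≤ β * dist x y := le_trans (le_abs_self _) (hfβ x y)
        have l1 : (f x - f y) * γ₁ x y ≤ 2 * α * γ₁ x y :=
          mul_le_mul_of_nonneg_right habs1 (h1 x y)
        have l2 : (f x - f y) * γ₂ x y ≤ β * dist x y * γ₂ x y :=
          mul_le_mul_of_nonneg_right habs2 (h2 x y)
        nlinarith [l1, l2]
    calc ∑ x, f x * (μ x - ν x) ≤ α * A + β * B := key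
      _ ≤ α * max A B + β * max A B := by
          gcongr
          · exact le_max_left _ _
          · exact le_max_right _ _
      _ = (α + β) * max A B := by ring
      _ ≤ 1 * max A B := mul_le_mul_of_nonneg_right hαβ hmax0
      _ = max A B := one_mul _
  · -- β < 0 : f is constant, s = 0
    push_neg at hβ
    have hconst : ∀ x y : X, f x = f y := by
      intro x y
      have h := hfβ x y
      have : |f x - f y| ≤ 0 := le_trans h (mul_nonpos_of_nonpos_of_nonneg hβ.le dist_nonneg)
      have := abs_nonneg (f x - f y)
      have : |f x - f y| = 0 := le_antisymm ‹|f x - f y| ≤ 0› ‹0 ≤ |f x - f y|›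
      have := abs_eq_zero.mp this
      linarith [this]
    obtain x₀ := Classical.arbitrary X
    have : ∑ x, f x * (μ x - ν x) = f x₀ * ∑ x, (μ x - ν x) := by
      rw [Finset.mul_sum]
      exact Finset.sum_congr rfl fun x _ => by rw [hconst x x₀]
    rw [this, Finset.sum_sub_distrib, hμ1, hν1]
    simpa using hmax0

lemma EOTDset_zero_mem (μ ν : X → ℝ) : (0:ℝ) ∈ EOTDset X μ ν := by
  refine ⟨fun _ => 0, 0, 0, by norm_num, by simp, by simp, by simp⟩

lemma EOT_strong (μ ν : X → ℝ) (hμ0 : ∀ x, 0 ≤ μ x) (hμ1 : ∑ x, μ x = 1)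
    (hν0 : ∀ x, 0 ≤ ν x) (hν1 : ∑ x, ν x = 1) (v : ℝ)
    (hv : ∀ t ∈ EOTPset X μ ν, v < t) :
    ∃ s ∈ EOTDset X μ ν, v < s := by
  classical
  -- the point (μ, ν, v, v) is not in the cone
  have hbS : ((μ, ν, v, v) : (X → ℝ) × (X → ℝ) × ℝ × ℝ) ∉ EOTcone X := by
    rintro ⟨γ₁, γ₂, s₁, s₂, h1, h2, hs1, hs2, heq⟩
    simp only [Prod.mk.injEq] at heq
    obtain ⟨e1, e2, e3, e4⟩ := heq
    have hrow : ∀ x, ∑ y, (γ₁ x y + γ₂ x y) = μ x := fun x => (congrFun e1 x).symm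
    have hcol : ∀ y, ∑ x, (γ₁ x y + γ₂ x y) = ν y := fun y => (congrFun e2 y).symm
    have ht : max (∑ x, ∑ y, γ₁ x y * (if x = y then 0 else 2))
        (∑ x, ∑ y, γ₂ x y * dist x y) ∈ EOTPset X μ ν :=
      ⟨γ₁, γ₂, h1, h2, hrow, hcol, rfl⟩
    have hlt := hv _ ht
    have hA : ∑ x, ∑ y, γ₁ x y * (if x = y then 0 else 2) ≤ v := by linarith
    have hB : ∑ x, ∑ y, γ₂ x y * dist x y ≤ v := by linarith
    have hmle : max (∑ x, ∑ y, γ₁ x y * (if x = y then 0 else 2))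
        (∑ x, ∑ y, γ₂ x y * dist x y) ≤ v := max_le hA hB
    linarith
  -- separating functional
  obtain ⟨z, u, hzS, hzb⟩ :=
    geometric_hahn_banach_closed_point EOTcone_convex EOTcone_isClosed hbS
  have hu0 : 0 < u := by
    have h0 := hzS 0 EOTcone_zero_mem
    rwa [map_zero] at h0
  have hzS' : ∀ p ∈ EOTcone X, z p ≤ 0 := by
    intro p hp
    by_contra hpos
    push_neg at hpos
    have hmem := EOTcone_smul (le_of_lt (div_pos hu0 hpos)) hp
    have hlt := hzS _ hmem
    rw [map_smul, smul_eq_mul, div_mul_cancel₀ _ (ne_of_gt hpos)] at hlt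
    exact lt_irrefl u hlt
  -- decomposition of z
  have hswap : ∀ (i : X), ((fun j => if i = j then (1:ℝ) else 0) : X → ℝ)
      = fun j => if j = i then (1:ℝ) else 0 := by
    intro i; funext j; exact if_congr eq_comm rfl rfl
  have hfst : ∀ uf : X → ℝ, z (uf, 0, 0, 0)
      = ∑ x, uf x * z ((fun a => if a = x then (1:ℝ) else 0), 0, 0, 0) := by
    intro uf
    have h := LinearMap.pi_apply_eq_sum_univ
      ((z : ((X → ℝ) × (X → ℝ) × ℝ × ℝ) →ₗ[ℝ] ℝ).comp
        (LinearMap.inl ℝ (X → ℝ) ((X → ℝ) × ℝ × ℝ))) uf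
    simp only [LinearMap.comp_apply, LinearMap.inl_apply,
      ContinuousLinearMap.coe_coe, smul_eq_mul] at h
    simp only [Prod.mk_zero_zero] at h ⊢
    rw [h]
    exact Finset.sum_congr rfl fun i _ => by rw [hswap i]
  have hsnd : ∀ wf : X → ℝ, z (0, wf, 0, 0)
      = ∑ y, wf y * z (0, (fun b => if b = y then (1:ℝ) else 0), 0, 0) := by
    intro wf
    have h := LinearMap.pi_apply_eq_sum_univ
      ((z : ((X → ℝ) × (X → ℝ) × ℝ × ℝ) →ₗ[ℝ] ℝ).comp
        ((LinearMap.inr ℝ (X → ℝ) ((X → ℝ) × ℝ × ℝ)).comp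
          (LinearMap.inl ℝ (X → ℝ) (ℝ × ℝ)))) wf
    simp only [LinearMap.comp_apply, LinearMap.inl_apply, LinearMap.inr_apply,
      ContinuousLinearMap.coe_coe, smul_eq_mul] at h
    simp only [Prod.mk_zero_zero] at h ⊢
    rw [h]
    exact Finset.sum_congr rfl fun i _ => by rw [hswap i]
  have hsplit : ∀ (uf wf : X → ℝ) (s t : ℝ),
      ((uf, wf, s, t) : (X → ℝ) × (X → ℝ) × ℝ × ℝ)
        = (uf, 0, 0, 0) + (0, wf, 0, 0) + s • (0, 0, 1, 0) + t • (0, 0, 0, 1) := by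
    intro uf wf s t
    refine Prod.ext ?_ (Prod.ext ?_ (Prod.ext ?_ ?_)) <;>
      simp [Prod.smul_mk]
  have hdual : ∀ (uf wf : X → ℝ) (s t : ℝ),
      z (uf, wf, s, t)
        = (∑ x, uf x * z ((fun a => if a = x then (1:ℝ) else 0), 0, 0, 0))
          + (∑ y, wf y * z (0, (fun b => if b = y then (1:ℝ) else 0), 0, 0))
          + s * z (0, 0, 1, 0) + t * z (0, 0, 0, 1) := by
    intro uf wf s t
    rw [hsplit uf wf s t, map_add, map_add, map_add, map_smul, map_smul,
      smul_eq_mul, smul_eq_mul, hfst, hsnd]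
  set g : X → ℝ := fun x => z ((fun a => if a = x then (1:ℝ) else 0), 0, 0, 0) with hgdef
  set h' : X → ℝ := fun y => z (0, (fun b => if b = y then (1:ℝ) else 0), 0, 0) with hhdef
  set r₁ : ℝ := z (0, 0, 1, 0) with hr1def
  set r₂ : ℝ := z (0, 0, 0, 1) with hr2def
  -- dual feasibility conditions
  have hc1 : ∀ x y : X, g x + h' y + (if x = y then (0:ℝ) else 2) * r₁ ≤ 0 := by
    intro x y
    have hle := hzS' _ (EOTcone_gen1 x y)
    rw [hdual] at hle
    simpa [ite_mul, Finset.sum_ite_eq'] using hle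
  have hc2 : ∀ x y : X, g x + h' y + dist x y * r₂ ≤ 0 := by
    intro x y
    have hle := hzS' _ (EOTcone_gen2 x y)
    rw [hdual] at hle
    simpa [ite_mul, Finset.sum_ite_eq'] using hle
  have hr1 : r₁ ≤ 0 := by
    have hle := hzS' _ (EOTcone_gen3 (X := X))
    rw [hdual] at hle
    simpa using hle
  have hr2 : r₂ ≤ 0 := by
    have hle := hzS' _ (EOTcone_gen4 (X := X))
    rw [hdual] at hle
    simpa using hle
  have hobj : 0 < (∑ x, μ x * g x) + (∑ y, ν y * h' y) + v * r₁ + v * r₂ := by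
    rw [hdual] at hzb
    linarith
  -- pure algebra from here on
  set ca : ℝ := -r₁ with hcadef
  set cb : ℝ := -r₂ with hcbdef
  have hr1ca : r₁ = -ca := by rw [hcadef]; ring
  have hr2cb : r₂ = -cb := by rw [hcbdef]; ring
  have hca0 : 0 ≤ ca := by rw [hcadef]; linarith
  have hcb0 : 0 ≤ cb := by rw [hcbdef]; linarith
  have hdiag : ∀ x : X, g x + h' x ≤ 0 := by
    intro x
    have := hc2 x x
    simpa using this
  have hc1' : ∀ x y : X, x ≠ y → g x + h' y ≤ 2 * ca := by
    intro x y hxy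
    have h := hc1 x y
    rw [if_neg hxy] at h
    have : (2:ℝ) * r₁ = -(2 * ca) := by rw [hr1ca]; ring
    linarith
  have hc2' : ∀ x y : X, g x + h' y ≤ cb * dist x y := by
    intro x y
    have h := hc2 x y
    have : dist x y * r₂ = -(cb * dist x y) := by rw [hr2cb]; ring
    linarith
  have hR : 0 < ca + cb := by
    rcases lt_or_ge 0 (ca + cb) with h | h
    · exact h
    · exfalso
      have hca : ca = 0 := le_antisymm (by linarith) hca0
      have hcb : cb = 0 := le_antisymm (by linarith) hcb0
      obtain ⟨y₀, -, hy₀⟩ := Finset.exists_mem_eq_sup' Finset.univ_nonempty h'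
      have hgle : ∀ x, g x ≤ -(h' y₀) := by
        intro x
        have h2 := hc2' x y₀
        rw [hcb, zero_mul] at h2
        linarith
      have hμg : ∑ x, μ x * g x ≤ -(h' y₀) := by
        calc ∑ x, μ x * g x ≤ ∑ x, μ x * (-(h' y₀)) :=
              Finset.sum_le_sum fun x _ => mul_le_mul_of_nonneg_left (hgle x) (hμ0 x)
          _ = -(h' y₀) := by rw [← Finset.sum_mul, hμ1, one_mul]
      have hνh : ∑ y, ν y * h' y ≤ h' y₀ := by
        calc ∑ y, ν y * h' y ≤ ∑ y, ν y * h' y₀ := by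
              refine Finset.sum_le_sum fun y _ => mul_le_mul_of_nonneg_left ?_ (hν0 y)
              rw [← hy₀]
              exact Finset.le_sup' h' (Finset.mem_univ y)
          _ = h' y₀ := by rw [← Finset.sum_mul, hν1, one_mul]
      have hv0 : v * r₁ + v * r₂ = 0 := by rw [hr1ca, hr2cb, hca, hcb]; ring
      linarith
  -- a pseudometric bounded by both costs
  set mf : X → X → ℝ := fun x y => if x = y then 0 else min (2*ca) (cb * dist x y)
    with hmfdef
  have hmf0 : ∀ x y, 0 ≤ mf x y := by
    intro x y
    simp only [hmfdef]
    split
    · exact le_rfl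
    · exact le_min (by linarith) (mul_nonneg hcb0 dist_nonneg)
  have hghm : ∀ x y, g x + h' y ≤ mf x y := by
    intro x y
    simp only [hmfdef]
    split
    · next h => subst h; exact hdiag x
    · next h => exact le_min (hc1' x y h) (hc2' x y)
  have htri : ∀ x y y', mf x y' ≤ mf x y + min (2*ca) (cb * dist y y') := by
    intro x y y'
    have hmin0 : 0 ≤ min (2*ca) (cb * dist y y') :=
      le_min (by linarith) (mul_nonneg hcb0 dist_nonneg)
    have hmin1 : 0 ≤ min (2*ca) (cb * dist x y) :=
      le_min (by linarith) (mul_nonneg hcb0 dist_nonneg)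
    by_cases h1 : x = y'
    · simp only [hmfdef]
      rw [if_pos h1]
      have := hmf0 x y
      simp only [hmfdef] at this
      linarith
    · by_cases h2 : x = y
      · subst h2
        simp only [hmfdef]
        simp [h1]
      · simp only [hmfdef]
        rw [if_neg h1, if_neg h2]
        rcases le_total (2*ca) (cb * dist x y) with hA | hA
        · calc min (2*ca) (cb * dist x y') ≤ 2*ca := min_le_left _ _
            _ ≤ min (2*ca) (cb*dist x y) + min (2*ca) (cb * dist y y') := by
                rw [min_eq_left hA]; linarith
        · rcases le_total (2*ca) (cb * dist y y') with hB | hB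
          · calc min (2*ca) (cb * dist x y') ≤ 2*ca := min_le_left _ _
              _ ≤ min (2*ca) (cb*dist x y) + min (2*ca) (cb * dist y y') := by
                  rw [min_eq_left hB]; linarith
          · calc min (2*ca) (cb * dist x y') ≤ cb * dist x y' := min_le_right _ _
              _ ≤ cb * (dist x y + dist y y') :=
                  mul_le_mul_of_nonneg_left (dist_triangle x y y') hcb0
              _ = cb * dist x y + cb * dist y y' := by ring
              _ = min (2*ca) (cb*dist x y) + min (2*ca) (cb * dist y y') := by
                  rw [min_eq_right hA, min_eq_right hB]
  set φf : X → ℝ := fun y => Finset.univ.sup' Finset.univ_nonempty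
      (fun x => g x - mf x y) with hφdef
  have hφg : ∀ y, g y ≤ φf y := by
    intro y
    have h0 : g y - mf y y = g y := by simp only [hmfdef]; simp
    calc g y = g y - mf y y := h0.symm
      _ ≤ φf y := Finset.le_sup' (fun x => g x - mf x y) (Finset.mem_univ y)
  have hφh : ∀ y, φf y ≤ -(h' y) := by
    intro y
    simp only [hφdef]
    refine Finset.sup'_le _ _ fun x _ => ?_
    linarith [hghm x y]
  have hosc : ∀ y y', φf y - φf y' ≤ min (2*ca) (cb * dist y y') := by
    intro y y'
    rw [sub_le_iff_le_add]
    simp only [hφdef]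
    refine Finset.sup'_le _ _ fun x _ => ?_
    have h1 := htri x y y'
    have h2 : g x - mf x y' ≤ Finset.univ.sup' Finset.univ_nonempty
        (fun x => g x - mf x y') :=
      Finset.le_sup' (fun x => g x - mf x y') (Finset.mem_univ x)
    linarith
  set Mx := Finset.univ.sup' Finset.univ_nonempty φf with hMxdef
  set mx := Finset.univ.inf' Finset.univ_nonempty φf with hmxdef
  obtain ⟨xM, -, hxM⟩ := Finset.exists_mem_eq_sup' Finset.univ_nonempty φf
  obtain ⟨xm, -, hxm⟩ := Finset.exists_mem_eq_inf' Finset.univ_nonempty φf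
  have hosc2 : Mx - mx ≤ 2*ca := by
    rw [hMxdef, hmxdef, hxM, hxm]
    exact le_trans (hosc xM xm) (min_le_left _ _)
  have hMge : ∀ x, φf x ≤ Mx := fun x => Finset.le_sup' _ (Finset.mem_univ x)
  have hmle : ∀ x, mx ≤ φf x := fun x => Finset.inf'_le _ (Finset.mem_univ x)
  set mid := (Mx + mx)/2 with hmiddef
  have hcenter : ∀ x, |φf x - mid| ≤ ca := by
    intro x
    rw [abs_le]
    constructor
    · have := hmle x; rw [hmiddef]; linarith
    · have := hMge x; rw [hmiddef]; linarith
  refine ⟨∑ x, ((φf x - mid)/(ca+cb)) * (μ x - ν x),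
    ⟨fun x => (φf x - mid)/(ca+cb), ca/(ca+cb), cb/(ca+cb), ?_, ?_, ?_, rfl⟩, ?_⟩
  · rw [← add_div, div_self (ne_of_gt hR)]
  · intro x
    rw [abs_div, abs_of_pos hR]
    exact (div_le_div_iff_of_pos_right hR).mpr (hcenter x)
  · intro x y
    have hsub : (φf x - mid)/(ca+cb) - (φf y - mid)/(ca+cb)
        = (φf x - φf y)/(ca+cb) := by
      field_simp
      ring
    rw [hsub, abs_div, abs_of_pos hR, div_mul_eq_mul_div]
    refine (div_le_div_iff_of_pos_right hR).mpr ?_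
    rw [abs_sub_le_iff]
    constructor
    · exact le_trans (hosc x y) (min_le_right _ _)
    · refine le_trans (hosc y x) ?_
      rw [dist_comm y x]
      exact min_le_right _ _
  · -- the value exceeds v
    have hμφ : ∑ x, μ x * g x ≤ ∑ x, μ x * φf x :=
      Finset.sum_le_sum fun x _ => mul_le_mul_of_nonneg_left (hφg x) (hμ0 x)
    have hνφ : ∑ y, ν y * h' y ≤ ∑ y, ν y * (-(φf y)) :=
      Finset.sum_le_sum fun y _ =>
        mul_le_mul_of_nonneg_left (by linarith [hφh y]) (hν0 y)
    have hν' : ∑ y, ν y * (-(φf y)) = -∑ y, ν y * φf y := by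
      rw [← Finset.sum_neg_distrib]
      exact Finset.sum_congr rfl fun y _ => by ring
    have hvr : v * r₁ + v * r₂ = -(v * (ca + cb)) := by rw [hr1ca, hr2cb]; ring
    have hkey : v * (ca + cb) < ∑ x, μ x * φf x - ∑ y, ν y * φf y := by
      rw [hν'] at hνφ
      linarith
    have hsum0 : ∑ x, (μ x - ν x) = 0 := by
      rw [Finset.sum_sub_distrib, hμ1, hν1]; ring
    have hexp : ∑ x, ((φf x - mid)/(ca+cb)) * (μ x - ν x)
        = ((∑ x, φf x * (μ x - ν x)) - mid * ∑ x, (μ x - ν x)) / (ca+cb) := by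
      calc ∑ x, ((φf x - mid)/(ca+cb)) * (μ x - ν x)
          = ∑ x, (φf x * (μ x - ν x) - mid * (μ x - ν x))/(ca+cb) :=
            Finset.sum_congr rfl fun x _ => by ring
        _ = (∑ x, (φf x * (μ x - ν x) - mid * (μ x - ν x)))/(ca+cb) := by
            rw [Finset.sum_div]
        _ = ((∑ x, φf x * (μ x - ν x)) - mid * ∑ x, (μ x - ν x)) / (ca+cb) := by
            rw [Finset.sum_sub_distrib, Finset.mul_sum]
    rw [hexp, hsum0, mul_zero, sub_zero, lt_div_iff₀ hR]
    have hre : ∑ x, φf x * (μ x - ν x) = ∑ x, μ x * φf x - ∑ y, ν y * φf y := by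
      rw [← Finset.sum_sub_distrib]
      exact Finset.sum_congr rfl fun x _ => by ring
    rw [hre]
    exact hkey

end EOTAux

/-- On a finite metric space, EOT with costs `c₁ = 2·1_{x≠y}` and `c₂ = d`
equals the Dudley metric. -/
theorem stmt_16 (X : Type*) [Fintype X] [Nonempty X] [MetricSpace X] [DecidableEq X]
    (μ ν : X → ℝ) (hμ0 : ∀ x, 0 ≤ μ x) (hμ1 : ∑ x, μ x = 1)
    (hν0 : ∀ x, 0 ≤ ν x) (hν1 : ∑ x, ν x = 1) :
    sInf {t : ℝ | ∃ γ₁ γ₂ : X → X → ℝ,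
        (∀ x y, 0 ≤ γ₁ x y) ∧ (∀ x y, 0 ≤ γ₂ x y) ∧
        (∀ x, ∑ y, (γ₁ x y + γ₂ x y) = μ x) ∧
        (∀ y, ∑ x, (γ₁ x y + γ₂ x y) = ν y) ∧
        t = max (∑ x, ∑ y, γ₁ x y * (if x = y then 0 else 2))
                (∑ x, ∑ y, γ₂ x y * dist x y)} =
    sSup {t : ℝ | ∃ f : X → ℝ, ∃ α β : ℝ, α + β ≤ 1 ∧
        (∀ x, |f x| ≤ α) ∧ (∀ x y, |f x - f y| ≤ β * dist x y) ∧
        t = ∑ x, f x * (μ x - ν x)} := by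
  have hPne : (EOTPset X μ ν).Nonempty := EOTPset_nonempty μ ν hμ1 hν1 hμ0 hν0
  have hDne : (EOTDset X μ ν).Nonempty := ⟨0, EOTDset_zero_mem μ ν⟩
  obtain ⟨t₀, ht₀⟩ := hPne
  have hPbdd : BddBelow (EOTPset X μ ν) := ⟨0, fun t ht => EOTPset_nonneg μ ν t ht⟩
  have hDbdd : BddAbove (EOTDset X μ ν) :=
    ⟨t₀, fun s hs => EOT_weak μ ν hμ1 hν1 s hs t₀ ht₀⟩
  show sInf (EOTPset X μ ν) = sSup (EOTDset X μ ν)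
  refine le_antisymm ?_ ?_
  · by_contra hcon
    push_neg at hcon
    set v := (sSup (EOTDset X μ ν) + sInf (EOTPset X μ ν)) / 2 with hvdef
    have hv1 : sSup (EOTDset X μ ν) < v := by rw [hvdef]; linarith
    have hv2 : v < sInf (EOTPset X μ ν) := by rw [hvdef]; linarith
    obtain ⟨s, hsD, hvs⟩ := EOT_strong μ ν hμ0 hμ1 hν0 hν1 v
      (fun t ht => lt_of_lt_of_le hv2 (csInf_le hPbdd ht))
    exact absurd (le_csSup hDbdd hsD) (not_le.mpr (lt_trans hv1 hvs))
  · refine csSup_le hDne fun s hs => le_csInf ⟨t₀, ht₀⟩ fun t ht =>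
      EOT_weak μ ν hμ1 hν1 s hs t ht
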